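/- Tang–Lin theorem (base case): for 2 voters and a 3-element set of alternatives, every social welfare function satisfying independence of irrelevant alternatives is dictatorial, or inversely dictatorial, or its range has at most 2 linear orders whose Kendall tau distance is at most 1. -/

import Mathlib

/-- A strict linear order on the 3-element set `Fin 3`, encoded as a boolean-valued
relation (`r a b = true` meaning `a` is ranked above `b`). -/
abbrev LO3 := {r : Fin 3 → Fin 3 → Bool // IsStrictTotalOrder (Fin 3) (fun a b => r a b = true)}

lemma LO3.mk_sto (r : Fin 3 → Fin 3 → Bool)
    (h₁ : ∀ a b, r a b = true ∨ a = b ∨ r b a = true)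
    (h₂ : ∀ a, ¬ r a a = true)
    (h₃ : ∀ a b c, r a b = true → r b c = true → r a c = true) :
    IsStrictTotalOrder (Fin 3) (fun a b => r a b = true) := by
  haveI : IsTrichotomous (Fin 3) (fun a b => r a b = true) := ⟨fun a b hab hba => ((h₁ a b).resolve_left hab).resolve_right hba⟩
  haveI : IsIrrefl (Fin 3) (fun a b => r a b = true) := ⟨h₂⟩
  haveI : IsTrans (Fin 3) (fun a b => r a b = true) := ⟨h₃⟩
  haveI : IsStrictOrder (Fin 3) (fun a b => r a b = true) := ⟨⟩
  exact ⟨⟩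

/-- The reverse (inverse) of a strict linear order. -/
def LO3.rev (r : LO3) : LO3 :=
  ⟨fun a b => r.val b a, by
    haveI := r.prop
    exact @IsStrictTotalOrder.swap (Fin 3) (fun a b => r.val a b = true) _⟩

/-- Kendall tau distance: the number of (unordered) pairs on which two orders disagree. -/
def kendall (r s : LO3) : ℕ :=
  (Finset.univ.filter
    (fun p : Fin 3 × Fin 3 => p.1 < p.2 ∧ r.val p.1 p.2 ≠ s.val p.1 p.2)).card

/-- Independence of irrelevant alternatives for a two-voter SWF on `Fin 3`. -/
def IIA2 (W : (Fin 2 → LO3) → LO3) : Prop :=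
  ∀ π π' : Fin 2 → LO3, ∀ a b : Fin 3,
    (∀ v, (π v).val a b = (π' v).val a b) → (W π).val a b = (W π').val a b

/-- Unanimity for a two-voter SWF on `Fin 3`. -/
def Unanimity2 (W : (Fin 2 → LO3) → LO3) : Prop :=
  ∀ π : Fin 2 → LO3, ∀ a b : Fin 3, (∀ v, (π v).val a b = true) → (W π).val a b = true

def Dictatorial (W : (Fin 2 → LO3) → LO3) : Prop := ∃ d, ∀ π, W π = π d

def InverselyDictatorial (W : (Fin 2 → LO3) → LO3) : Prop := ∃ d, ∀ π, W π = (π d).rev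

/- ### Auxiliary combinatorial layer -/

abbrev T3 := Bool × Bool × Bool
abbrev T4 := Bool × Bool × Bool × Bool

abbrev validT (t : T3) : Prop :=
  (!(t.1 && t.2.2 && !t.2.1) && !(!t.1 && !t.2.2 && t.2.1)) = true

def gapp (g : T4) (x y : Bool) : Bool :=
  cond x (cond y g.1 g.2.1) (cond y g.2.2.1 g.2.2.2)

def tabOf (f : Bool → Bool → Bool) : T4 := (f true true, f true false, f false true, f false false)

lemma gapp_tab (f : Bool → Bool → Bool) (x y : Bool) : gapp (tabOf f) x y = f x y := by
  cases x <;> cases y <;> rfl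

def outT (g01 g02 g12 : T4) (u v : T3) : T3 :=
  (gapp g01 u.1 v.1, gapp g02 u.2.1 v.2.1, gapp g12 u.2.2 v.2.2)

def revT (t : T3) : T3 := (!t.1, !t.2.1, !t.2.2)

def kendT (t s : T3) : ℕ :=
  (if t.1 = s.1 then 0 else 1) + (if t.2.1 = s.2.1 then 0 else 1) +
    (if t.2.2 = s.2.2 then 0 else 1)

def VL : List T3 := [(true,true,true),(true,true,false),(false,true,true),
  (true,false,false),(false,false,true),(false,false,false)]

lemma VL_valid : ∀ t ∈ VL, validT t := by decide

lemma mem_VL : ∀ t : T3, validT t → t ∈ VL := by decide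

set_option synthInstance.maxHeartbeats 1000000 in
set_option synthInstance.maxSize 100000 in
set_option maxRecDepth 100000 in
set_option maxHeartbeats 4000000 in
lemma keyT : ∀ g01 g02 g12 : T4,
    (∀ u ∈ VL, ∀ v ∈ VL, validT (outT g01 g02 g12 u v)) →
    ((∀ u ∈ VL, ∀ v ∈ VL, outT g01 g02 g12 u v = u) ∨
     (∀ u ∈ VL, ∀ v ∈ VL, outT g01 g02 g12 u v = v) ∨
     (∀ u ∈ VL, ∀ v ∈ VL, outT g01 g02 g12 u v = revT u) ∨
     (∀ u ∈ VL, ∀ v ∈ VL, outT g01 g02 g12 u v = revT v) ∨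
     (∃ r ∈ VL, ∃ s ∈ VL, kendT r s ≤ 1 ∧
        ∀ u ∈ VL, ∀ v ∈ VL,
          outT g01 g02 g12 u v = r ∨ outT g01 g02 g12 u v = s)) := by decide

/- ### Encoding linear orders by bit triples -/

def mkR (t : T3) : Fin 3 → Fin 3 → Bool := fun a b =>
  match a.val, b.val with
  | 0, 1 => t.1
  | 1, 0 => !t.1
  | 0, 2 => t.2.1
  | 2, 0 => !t.2.1
  | 1, 2 => t.2.2
  | 2, 1 => !t.2.2
  | _, _ => false

lemma mkR_tri : ∀ t : T3, validT t →
    ∀ a b, mkR t a b = true ∨ a = b ∨ mkR t b a = true := by decide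

lemma mkR_irr : ∀ t : T3, validT t → ∀ a, ¬ mkR t a a = true := by decide

lemma mkR_trans : ∀ t : T3, validT t →
    ∀ a b c, mkR t a b = true → mkR t b c = true → mkR t a c = true := by decide

def LO3.mk' (t : T3) (h : validT t) : LO3 :=
  ⟨mkR t, LO3.mk_sto _ (mkR_tri t h) (mkR_irr t h) (mkR_trans t h)⟩

def bitsOf (r : LO3) : T3 := (r.val 0 1, r.val 0 2, r.val 1 2)

lemma bits_mk (t : T3) (h : validT t) : bitsOf (LO3.mk' t h) = t := by
  obtain ⟨a, b, c⟩ := t; rfl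

lemma LO3.diag (r : LO3) (a : Fin 3) : r.val a a = false := by
  haveI := r.prop
  have := irrefl (r := fun a b => r.val a b = true) a
  simpa using this

lemma LO3.trans' (r : LO3) (a b c : Fin 3) (h1 : r.val a b = true)
    (h2 : r.val b c = true) : r.val a c = true := by
  haveI := r.prop
  exact @IsTrans.trans (Fin 3) (fun a b => r.val a b = true) _ a b c h1 h2

lemma LO3.asymm (r : LO3) (a b : Fin 3) (h : r.val a b = true) : r.val b a = false := by
  haveI := r.prop
  cases hba : r.val b a with
  | false => rfl
  | true =>
    have h2 : r.val a a = true := r.trans' a b a h hba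
    rw [r.diag a] at h2; exact absurd h2 (by simp)

lemma LO3.flip (r : LO3) (a b : Fin 3) (hab : a ≠ b) : r.val b a = !(r.val a b) := by
  haveI := r.prop
  cases h : r.val a b with
  | true => simp [r.asymm a b h]
  | false =>
    rcases trichotomous (r := fun a b => r.val a b = true) a b with h' | h' | h'
    · rw [h] at h'; exact absurd h' (by simp)
    · exact absurd h' hab
    · simp [h']

lemma bits_valid (r : LO3) : validT (bitsOf r) := by
  show (!(r.val 0 1 && r.val 1 2 && !r.val 0 2) && !(!r.val 0 1 && !r.val 1 2 && r.val 0 2)) = true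
  have t1 : r.val 0 1 = true → r.val 1 2 = true → r.val 0 2 = true := r.trans' 0 1 2
  have t2 : r.val 2 1 = true → r.val 1 0 = true → r.val 2 0 = true := r.trans' 2 1 0
  have f01 := r.flip 0 1 (by decide)
  have f02 := r.flip 0 2 (by decide)
  have f12 := r.flip 1 2 (by decide)
  cases h01 : r.val 0 1 <;> cases h02 : r.val 0 2 <;> cases h12 : r.val 1 2 <;> simp_all

lemma val_eq_mkR (r : LO3) : r.val = mkR (bitsOf r) := by
  funext a b
  fin_cases a <;> fin_cases b
  · exact r.diag 0
  · rfl
  · rfl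
  · exact r.flip 0 1 (by decide)
  · exact r.diag 1
  · rfl
  · exact r.flip 0 2 (by decide)
  · exact r.flip 1 2 (by decide)
  · exact r.diag 2

lemma ext_bits {r s : LO3} (h : bitsOf r = bitsOf s) : r = s :=
  Subtype.ext (by rw [val_eq_mkR r, val_eq_mkR s, h])

lemma bits_rev (r : LO3) : bitsOf r.rev = revT (bitsOf r) := by
  show (r.val 1 0, r.val 2 0, r.val 2 1) = _
  rw [r.flip 0 1 (by decide), r.flip 0 2 (by decide), r.flip 1 2 (by decide)]
  rfl

lemma kend_eq (r s : LO3) : kendall r s = kendT (bitsOf r) (bitsOf s) := by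
  unfold kendall
  simp only [val_eq_mkR r, val_eq_mkR s]
  generalize bitsOf r = t
  generalize bitsOf s = w
  obtain ⟨a, b, c⟩ := t; obtain ⟨d, e, f⟩ := w
  cases a <;> cases b <;> cases c <;> cases d <;> cases e <;> cases f <;> decide

def cRep (x : Bool) : LO3 := LO3.mk' (x, x, x) (by cases x <;> decide)

lemma cRep_val01 (x : Bool) : (cRep x).val 0 1 = x := rfl
lemma cRep_val02 (x : Bool) : (cRep x).val 0 2 = x := rfl
lemma cRep_val12 (x : Bool) : (cRep x).val 1 2 = x := rfl

/-- Tang–Lin theorem (base case): for 2 voters and a 3-element set of alternatives,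
every social welfare function satisfying independence of irrelevant alternatives is
dictatorial, or inversely dictatorial, or its range consists of at most 2 linear
orders whose Kendall tau distance is at most 1. -/
theorem tang_lin_base_case (W : (Fin 2 → LO3) → LO3) (hIIA : IIA2 W) :
    Dictatorial W ∨ InverselyDictatorial W ∨
      (∃ r s : LO3, kendall r s ≤ 1 ∧ ∀ π, W π = r ∨ W π = s) := by
  set f01 : Bool → Bool → Bool := fun x y => (W ![cRep x, cRep y]).val 0 1 with hf01
  set f02 : Bool → Bool → Bool := fun x y => (W ![cRep x, cRep y]).val 0 2 with hf02
  set f12 : Bool → Bool → Bool := fun x y => (W ![cRep x, cRep y]).val 1 2 with hf12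
  set g01 := tabOf f01
  set g02 := tabOf f02
  set g12 := tabOf f12
  have hbits : ∀ π : Fin 2 → LO3,
      bitsOf (W π) = outT g01 g02 g12 (bitsOf (π 0)) (bitsOf (π 1)) := by
    intro π
    have h1 : (W π).val 0 1 = f01 ((π 0).val 0 1) ((π 1).val 0 1) := by
      apply hIIA π ![cRep ((π 0).val 0 1), cRep ((π 1).val 0 1)] 0 1
      intro v; fin_cases v <;> rfl
    have h2 : (W π).val 0 2 = f02 ((π 0).val 0 2) ((π 1).val 0 2) := by
      apply hIIA π ![cRep ((π 0).val 0 2), cRep ((π 1).val 0 2)] 0 2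
      intro v; fin_cases v <;> rfl
    have h3 : (W π).val 1 2 = f12 ((π 0).val 1 2) ((π 1).val 1 2) := by
      apply hIIA π ![cRep ((π 0).val 1 2), cRep ((π 1).val 1 2)] 1 2
      intro v; fin_cases v <;> rfl
    show ((W π).val 0 1, (W π).val 0 2, (W π).val 1 2) = _
    rw [h1, h2, h3]
    show _ = (gapp g01 _ _, gapp g02 _ _, gapp g12 _ _)
    rw [gapp_tab, gapp_tab, gapp_tab]
    rfl
  have hvalid : ∀ u ∈ VL, ∀ v ∈ VL, validT (outT g01 g02 g12 u v) := by
    intro u hu v hv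
    have := hbits ![LO3.mk' u (VL_valid u hu), LO3.mk' v (VL_valid v hv)]
    rw [show (![LO3.mk' u (VL_valid u hu), LO3.mk' v (VL_valid v hv)] : Fin 2 → LO3) 0
        = LO3.mk' u (VL_valid u hu) from rfl,
       show (![LO3.mk' u (VL_valid u hu), LO3.mk' v (VL_valid v hv)] : Fin 2 → LO3) 1
        = LO3.mk' v (VL_valid v hv) from rfl, bits_mk, bits_mk] at this
    rw [← this]
    exact bits_valid _
  rcases keyT g01 g02 g12 hvalid with h | h | h | h | ⟨r, hr, s, hs, hk, hall⟩
  · left; exact ⟨0, fun π => ext_bits (by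
      rw [hbits π]
      exact h _ (mem_VL _ (bits_valid (π 0))) _ (mem_VL _ (bits_valid (π 1))))⟩
  · left; exact ⟨1, fun π => ext_bits (by
      rw [hbits π]
      exact h _ (mem_VL _ (bits_valid (π 0))) _ (mem_VL _ (bits_valid (π 1))))⟩
  · right; left; exact ⟨0, fun π => ext_bits (by
      rw [hbits π, bits_rev]
      exact h _ (mem_VL _ (bits_valid (π 0))) _ (mem_VL _ (bits_valid (π 1))))⟩
  · right; left; exact ⟨1, fun π => ext_bits (by
      rw [hbits π, bits_rev]
      exact h _ (mem_VL _ (bits_valid (π 0))) _ (mem_VL _ (bits_valid (π 1))))⟩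
  · right; right
    refine ⟨LO3.mk' r (VL_valid r hr), LO3.mk' s (VL_valid s hs), ?_, ?_⟩
    · rw [kend_eq, bits_mk, bits_mk]; exact hk
    · intro π
      rcases hall _ (mem_VL _ (bits_valid (π 0))) _ (mem_VL _ (bits_valid (π 1))) with h | h
      · left; exact ext_bits (by rw [hbits π, bits_mk]; exact h)
      · right; exact ext_bits (by rw [hbits π, bits_mk]; exact h)
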